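/- arXiv:1610.05170 — 4 statements merged into one kernel-verified Lean document; each statement's English description precedes it below -/
import Mathlib

section
/- Let I ⊆ ℝ be an open interval, let f : ℝ → ℝ be twice differentiable on I with f(t) > 0 for all t ∈ I, and suppose B := 2f′/f satisfies: B(t)² + 2B′(t) is equal to the same constant c for all t ∈ I. Then the function t ↦ f(t)²·B′(t) is constant on I. -/
open Real

/-- If `f` is twice differentiable and positive on an open interval `I`,
and `B := 2 f'/f` satisfies `B² + 2 B' ≡ c` on `I` for a constant `c`, then
`t ↦ f t ² · B' t` is constant on `I`. -/
theorem stmt_2 (I : Set ℝ) (hIopen : IsOpen I) (hIconn : I.OrdConnected)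
    (f : ℝ → ℝ)
    (hf : ∀ t ∈ I, DifferentiableAt ℝ f t)
    (hf' : ∀ t ∈ I, DifferentiableAt ℝ (deriv f) t)
    (hfpos : ∀ t ∈ I, 0 < f t)
    (B : ℝ → ℝ) (hB : B = fun t => 2 * deriv f t / f t)
    (c : ℝ) (hc : ∀ t ∈ I, (B t) ^ 2 + 2 * deriv B t = c) :
    ∀ s ∈ I, ∀ t ∈ I, f s ^ 2 * deriv B s = f t ^ 2 * deriv B t := by
  set h : ℝ → ℝ := fun t => f t ^ 2 * (c - B t ^ 2) / 2 with hh
  -- h has derivative 0 on I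
  have hderiv : ∀ t ∈ I, HasDerivAt h 0 t := by
    intro t ht
    have hfne : f t ≠ 0 := ne_of_gt (hfpos t ht)
    set d : ℝ := (2 * deriv (deriv f) t * f t - 2 * deriv f t * deriv f t) / f t ^ 2 with hd
    have hBd : HasDerivAt B d t := by
      rw [hB]
      exact (((hf' t ht).hasDerivAt).const_mul 2).div ((hf t ht).hasDerivAt) hfne
    have hdB : deriv B t = d := hBd.deriv
    have hct : B t ^ 2 + 2 * d = c := by rw [← hdB]; exact hc t ht
    have h1 : HasDerivAt (fun t => f t ^ 2) ((2 : ℕ) * f t ^ 1 * deriv f t) t :=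
      (hf t ht).hasDerivAt.pow 2
    have h2 : HasDerivAt (fun t => c - B t ^ 2) (0 - (2 : ℕ) * B t ^ 1 * d) t :=
      (hasDerivAt_const t c).sub (hBd.pow 2)
    have h3 := (h1.mul h2).div_const 2
    convert h3 using 1
    case e'_4 => rfl
    case e'_5 => rfl
    case e'_8 => rfl
    have hBt : B t = 2 * deriv f t / f t := by rw [hB]
    have hc2 : c - B t ^ 2 = 2 * d := by linarith
    rw [hc2, hBt]
    push_cast
    field_simp
    ring
  -- from hc, f s ^ 2 * deriv B s = h s on I
  have hval : ∀ t ∈ I, f t ^ 2 * deriv B t = h t := by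
    intro t ht
    have := hc t ht
    simp only [hh]
    nlinarith [this]
  -- h is constant on I
  have hconst : ∀ s ∈ I, ∀ t ∈ I, s ≤ t → h s = h t := by
    intro s hs t ht hst
    have hsub : Set.Icc s t ⊆ I := hIconn.out hs ht
    have hcont : ContinuousOn h (Set.Icc s t) := fun x hx =>
      ((hderiv x (hsub hx)).differentiableAt.continuousAt).continuousWithinAt
    have := constant_of_has_deriv_right_zero hcont
      (fun x hx => (hderiv x (hsub (Set.Ico_subset_Icc_self hx))).hasDerivWithinAt)
      t (Set.right_mem_Icc.mpr hst)
    exact this.symm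
  intro s hs t ht
  rw [hval s hs, hval t ht]
  rcases le_total s t with hst | hst
  · exact hconst s hs t ht hst
  · exact (hconst t ht s hs hst).symm
end

section
/- Let n ≥ 2 be an integer, I ⊆ ℝ an open interval, and f : ℝ → ℝ twice differentiable on I with f(t) > 0 for all t ∈ I. Set B := 2f′/f and suppose there is a constant \bar Λ ∈ ℝ with −(1/8)·n·(n−1)·(B(t)² + 2B′(t)) = \bar Λ for all t ∈ I. Then exactly one of the following holds: (1) \bar Λ < 0, and setting L := √(n(n−1)/(−2\bar Λ)), there exist L′ ∈ {L, −L}, C > 0, and b ∈ ℝ such that on I either f(t) = C·e^{t/L′}, or f(t) = C·cosh((b+t)/L′), or f(t) = C·sinh((b+t)/L′) with (b+t)/L′ > 0 on I; (2) \bar Λ > 0, and setting L := √(n(n−1)/(2\bar Λ)), there exist C > 0 and b ∈ ℝ such that f(t) = C·cos((b+t)/L) for all t ∈ I; (3) \bar Λ = 0, and there exist a, c ∈ ℝ such that f(t) = a·t + c for all t ∈ I. -/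
open Real

lemma constOn' {I : Set ℝ} (hI : I.OrdConnected) {g : ℝ → ℝ}
    (hg : ∀ t ∈ I, HasDerivAt g 0 t) : ∀ x ∈ I, ∀ y ∈ I, g y = g x := by
  have key : ∀ x ∈ I, ∀ y ∈ I, x ≤ y → g y = g x := by
    intro x hx y hy hxy
    have hsub : Set.Icc x y ⊆ I := hI.out hx hy
    have hcont : ContinuousOn g (Set.Icc x y) := fun t ht =>
      ((hg t (hsub ht)).continuousAt).continuousWithinAt
    exact constant_of_has_deriv_right_zero hcont
      (fun s hs => (hg s (hsub (Set.mem_Icc_of_Ico hs))).hasDerivWithinAt)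
      y (Set.right_mem_Icc.2 hxy)
  intro x hx y hy
  rcases le_total x y with h | h
  · exact key x hx y hy h
  · exact (key y hy x hx h).symm


lemma keyODE {I : Set ℝ} {f : ℝ → ℝ}
    (hf : ∀ t ∈ I, DifferentiableAt ℝ f t)
    (hf' : ∀ t ∈ I, DifferentiableAt ℝ (deriv f) t)
    (hfpos : ∀ t ∈ I, 0 < f t)
    {a Λ : ℝ} (ha : 1 < a)
    (hΛ : ∀ t ∈ I, -(1/8) * a * (a - 1) *
      ((2 * deriv f t / f t) ^ 2 + 2 * deriv (fun s => 2 * deriv f s / f s) t) = Λ) :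
    ∀ t ∈ I, deriv (deriv f) t = (-2 * Λ / (a * (a - 1))) * f t := by
  intro t ht
  have hft : f t ≠ 0 := (hfpos t ht).ne'
  have hd : deriv (fun s => 2 * deriv f s / f s) t
      = (2 * deriv (deriv f) t * f t - 2 * deriv f t * deriv f t) / f t ^ 2 := by
    show deriv ((fun y => 2 * deriv f y) / f) t = _
    rw [deriv_div ((hf' t ht).const_mul 2) (hf t ht) hft, deriv_const_mul 2 (hf' t ht)]
  have h := hΛ t ht
  rw [hd] at h
  have ha0 : a ≠ 0 := by linarith
  have ha1 : a - 1 ≠ 0 := by linarith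
  field_simp at h
  have hs : (deriv (deriv f) t * (a*(a-1)) + 2*Λ*f t) * f t = 0 := by
    linear_combination (-(1:ℝ)/4) * h
  rcases mul_eq_zero.1 hs with h0 | h0
  · have haa : a * (a-1) ≠ 0 := mul_ne_zero ha0 ha1
    field_simp
    linarith
  · exact absurd h0 hft

lemma solCos {I : Set ℝ} (hIconn : I.OrdConnected) {f : ℝ → ℝ}
    (hf : ∀ t ∈ I, DifferentiableAt ℝ f t)
    (hf' : ∀ t ∈ I, DifferentiableAt ℝ (deriv f) t)
    (hfpos : ∀ t ∈ I, 0 < f t)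
    {L : ℝ} (hL : 0 < L)
    (hode : ∀ t ∈ I, deriv (deriv f) t = -(1/L^2) * f t) :
    ∃ C : ℝ, 0 < C ∧ ∃ b : ℝ, ∀ t ∈ I, f t = C * Real.cos ((b + t) / L) := by
  rcases Set.eq_empty_or_nonempty I with hI | ⟨t₀, ht₀⟩
  · exact ⟨1, one_pos, 0, by simp [hI]⟩
  have hL0 : L ≠ 0 := hL.ne'
  have hdiv : ∀ t : ℝ, HasDerivAt (fun s : ℝ => s / L) (1/L) t := by
    intro t
    simpa using (hasDerivAt_id t).div_const L
  have hcos : ∀ t : ℝ, HasDerivAt (fun s => Real.cos (s / L)) (-Real.sin (t/L) * (1/L)) t :=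
    fun t => HasDerivAt.comp (h₂ := Real.cos) t (Real.hasDerivAt_cos (t/L)) (hdiv t)
  have hsin : ∀ t : ℝ, HasDerivAt (fun s => Real.sin (s / L)) (Real.cos (t/L) * (1/L)) t :=
    fun t => HasDerivAt.comp (h₂ := Real.sin) t (Real.hasDerivAt_sin (t/L)) (hdiv t)
  set g1 : ℝ → ℝ := fun t => f t * Real.cos (t/L) - L * deriv f t * Real.sin (t/L) with hg1def
  set g2 : ℝ → ℝ := fun t => f t * Real.sin (t/L) + L * deriv f t * Real.cos (t/L) with hg2def
  have hg1 : ∀ t ∈ I, HasDerivAt g1 0 t := by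
    intro t ht
    have A := ((hf t ht).hasDerivAt.mul (hcos t)).sub
      (((hf' t ht).hasDerivAt.const_mul L).mul (hsin t))
    refine A.congr_deriv (Eq.symm ?_)
    rw [hode t ht]
    field_simp
    ring
  have hg2 : ∀ t ∈ I, HasDerivAt g2 0 t := by
    intro t ht
    have A := ((hf t ht).hasDerivAt.mul (hsin t)).add
      (((hf' t ht).hasDerivAt.const_mul L).mul (hcos t))
    refine A.congr_deriv (Eq.symm ?_)
    rw [hode t ht]
    field_simp
    ring
  have hrep : ∀ t ∈ I, f t = g1 t₀ * Real.cos (t/L) + g2 t₀ * Real.sin (t/L) := by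
    intro t ht
    rw [← constOn' hIconn hg1 t₀ ht₀ t ht, ← constOn' hIconn hg2 t₀ ht₀ t ht]
    simp only [hg1def, hg2def]
    linear_combination (-(f t)) * Real.sin_sq_add_cos_sq (t/L)
  have hC2 : 0 < g1 t₀^2 + g2 t₀^2 := by
    rcases (lt_or_eq_of_le (by positivity : (0:ℝ) ≤ g1 t₀^2 + g2 t₀^2)) with h | h
    · exact h
    · exfalso
      have h1 : g1 t₀ = 0 := by nlinarith [sq_nonneg (g1 t₀), sq_nonneg (g2 t₀)]
      have h2 : g2 t₀ = 0 := by nlinarith [sq_nonneg (g1 t₀), sq_nonneg (g2 t₀)]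
      have := hrep t₀ ht₀
      have h3 := hrep t₀ ht₀
      rw [h1, h2] at h3
      have := hfpos t₀ ht₀
      simp at h3
      linarith
  set C := Real.sqrt (g1 t₀^2 + g2 t₀^2) with hCdef
  have hC : 0 < C := Real.sqrt_pos.2 hC2
  have hCsq : C^2 = g1 t₀^2 + g2 t₀^2 := Real.sq_sqrt hC2.le
  set z : ℂ := ⟨g1 t₀, -(g2 t₀)⟩ with hzdef
  have habs : ‖z‖ = C := by
    rw [Complex.norm_def, Complex.normSq_mk]
    rw [hCdef]
    ring_nf
  have hz : z ≠ 0 := by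
    intro h
    rw [h] at habs
    simp at habs
    linarith
  set θ := Complex.arg z with hθ
  have hcosθ : Real.cos θ = g1 t₀ / C := by
    rw [hθ, Complex.cos_arg hz, habs]
  have hsinθ : Real.sin θ = -(g2 t₀) / C := by
    rw [hθ, Complex.sin_arg, habs]
  refine ⟨C, hC, θ * L, fun t ht => ?_⟩
  have hsplit : (θ * L + t) / L = θ + t / L := by
    field_simp
  rw [hrep t ht, hsplit, Real.cos_add, hcosθ, hsinθ]
  field_simp
  ring

lemma solHyp {I : Set ℝ} (hIconn : I.OrdConnected) {f : ℝ → ℝ}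
    (hf : ∀ t ∈ I, DifferentiableAt ℝ f t)
    (hf' : ∀ t ∈ I, DifferentiableAt ℝ (deriv f) t)
    (hfpos : ∀ t ∈ I, 0 < f t)
    {L : ℝ} (hL : 0 < L)
    (hode : ∀ t ∈ I, deriv (deriv f) t = (1/L^2) * f t) :
    ∃ L' ∈ ({L, -L} : Set ℝ), ∃ C : ℝ, 0 < C ∧ ∃ b : ℝ,
      ((∀ t ∈ I, f t = C * Real.exp (t / L')) ∨
       (∀ t ∈ I, f t = C * Real.cosh ((b + t) / L')) ∨
       (∀ t ∈ I, f t = C * Real.sinh ((b + t) / L') ∧ 0 < (b + t) / L')) := by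
  rcases Set.eq_empty_or_nonempty I with hI | ⟨t₀, ht₀⟩
  · exact ⟨L, Set.mem_insert _ _, 1, one_pos, 0, Or.inl (by simp [hI])⟩
  have hL0 : L ≠ 0 := hL.ne'
  have hdiv : ∀ t : ℝ, HasDerivAt (fun s : ℝ => s / L) (1/L) t := by
    intro t
    simpa using (hasDerivAt_id t).div_const L
  have hndiv : ∀ t : ℝ, HasDerivAt (fun s : ℝ => -(s / L)) (-(1/L)) t :=
    fun t => (hdiv t).neg
  have hexp : ∀ t : ℝ, HasDerivAt (fun s => Real.exp (s / L)) (Real.exp (t/L) * (1/L)) t :=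
    fun t => HasDerivAt.comp (h₂ := Real.exp) t (Real.hasDerivAt_exp (t/L)) (hdiv t)
  have hexp' : ∀ t : ℝ, HasDerivAt (fun s => Real.exp (-(s / L))) (Real.exp (-(t/L)) * (-(1/L))) t :=
    fun t => HasDerivAt.comp (h₂ := Real.exp) t (Real.hasDerivAt_exp (-(t/L))) (hndiv t)
  set g1 : ℝ → ℝ := fun t => (f t - L * deriv f t) * Real.exp (t/L) with hg1def
  set g2 : ℝ → ℝ := fun t => (f t + L * deriv f t) * Real.exp (-(t/L)) with hg2def
  have hg1 : ∀ t ∈ I, HasDerivAt g1 0 t := by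
    intro t ht
    have A := ((hf t ht).hasDerivAt.sub ((hf' t ht).hasDerivAt.const_mul L)).mul (hexp t)
    refine A.congr_deriv (Eq.symm ?_)
    rw [hode t ht]
    simp only [Pi.sub_apply]
    field_simp
    ring
  have hg2 : ∀ t ∈ I, HasDerivAt g2 0 t := by
    intro t ht
    have A := ((hf t ht).hasDerivAt.add ((hf' t ht).hasDerivAt.const_mul L)).mul (hexp' t)
    refine A.congr_deriv (Eq.symm ?_)
    rw [hode t ht]
    simp only [Pi.add_apply]
    field_simp
    ring
  have hrep : ∀ t ∈ I, f t = (g1 t₀ * Real.exp (-(t/L)) + g2 t₀ * Real.exp (t/L)) / 2 := by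
    intro t ht
    rw [← constOn' hIconn hg1 t₀ ht₀ t ht, ← constOn' hIconn hg2 t₀ ht₀ t ht]
    have hE : Real.exp (t/L) * Real.exp (-(t/L)) = 1 := by
      rw [← Real.exp_add]; simp
    simp only [hg1def, hg2def]
    linear_combination (-(f t)) * hE
  set c₁ := g1 t₀
  set c₂ := g2 t₀
  have hrep0 := hrep t₀ ht₀
  have hf0 := hfpos t₀ ht₀
  have hE1 : (0:ℝ) < Real.exp (-(t₀/L)) := Real.exp_pos _
  have hE2 : (0:ℝ) < Real.exp (t₀/L) := Real.exp_pos _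
  rcases lt_trichotomy c₁ 0 with h1 | h1 | h1 <;> rcases lt_trichotomy c₂ 0 with h2 | h2 | h2
  -- c₁<0, c₂<0 : impossible
  · exfalso; nlinarith
  -- c₁<0, c₂=0 : impossible
  · exfalso; rw [h2] at hrep0; nlinarith
  -- c₁<0, c₂>0 : sinh with L' = L
  · have hprod : (0:ℝ) < (-c₁) * c₂ := by nlinarith
    set C := Real.sqrt ((-c₁) * c₂) with hCdef
    have hC : 0 < C := Real.sqrt_pos.2 hprod
    have hCsq : C^2 = (-c₁) * c₂ := Real.sq_sqrt hprod.le
    set b := L * Real.log (c₂ / C) with hbdef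
    have hbL : b / L = Real.log (c₂ / C) := by rw [hbdef]; field_simp
    have hb1 : C * Real.exp (b/L) = c₂ := by
      rw [hbL, Real.exp_log (div_pos h2 hC)]
      field_simp
    have hb2 : C * Real.exp (-(b/L)) = -c₁ := by
      rw [hbL, Real.exp_neg, Real.exp_log (div_pos h2 hC), inv_div,
        ← mul_div_assoc, div_eq_iff h2.ne']
      nlinarith [hCsq]
    have key : ∀ t ∈ I, f t = C * Real.sinh ((b + t) / L) := by
      intro t ht
      have hs1 : Real.exp ((b+t)/L) = Real.exp (b/L) * Real.exp (t/L) := by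
        rw [← Real.exp_add, add_div]
      have hs2 : Real.exp (-((b+t)/L)) = Real.exp (-(b/L)) * Real.exp (-(t/L)) := by
        rw [← Real.exp_add, add_div, neg_add]
      rw [hrep t ht, Real.sinh_eq, hs1, hs2]
      linear_combination (-(Real.exp (t/L))/2) * hb1 + (Real.exp (-(t/L))/2) * hb2
    refine ⟨L, Set.mem_insert _ _, C, hC, b, Or.inr (Or.inr (fun t ht => ?_))⟩
    refine ⟨key t ht, ?_⟩
    have := hfpos t ht
    rw [key t ht] at this
    have hsinh : 0 < Real.sinh ((b + t)/L) := by nlinarith [this, hC]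
    exact Real.sinh_pos_iff.1 hsinh
  -- c₁=0, c₂<0 : impossible
  · exfalso; rw [h1] at hrep0; nlinarith
  -- c₁=0, c₂=0 : impossible
  · exfalso; rw [h1, h2] at hrep0; simp at hrep0; linarith
  -- c₁=0, c₂>0 : exp with L' = L
  · refine ⟨L, Set.mem_insert _ _, c₂/2, by linarith, 0, Or.inl (fun t ht => ?_)⟩
    rw [hrep t ht, h1]
    ring
  -- c₁>0, c₂<0 : sinh with L' = -L
  · have hprod : (0:ℝ) < c₁ * (-c₂) := by nlinarith
    set C := Real.sqrt (c₁ * (-c₂)) with hCdef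
    have hC : 0 < C := Real.sqrt_pos.2 hprod
    have hCsq : C^2 = c₁ * (-c₂) := Real.sq_sqrt hprod.le
    set b := L * Real.log ((-c₂) / C) with hbdef
    have hbL : b / L = Real.log ((-c₂) / C) := by rw [hbdef]; field_simp
    have hb1 : C * Real.exp (b/L) = -c₂ := by
      rw [hbL, Real.exp_log (div_pos (by linarith) hC)]
      field_simp
      try ring
    have hb2 : C * Real.exp (-(b/L)) = c₁ := by
      rw [hbL, Real.exp_neg, Real.exp_log (div_pos (by linarith) hC), inv_div,
        ← mul_div_assoc, div_eq_iff (by linarith : (-c₂ : ℝ) ≠ 0)]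
      nlinarith [hCsq]
    have key : ∀ t ∈ I, f t = C * Real.sinh ((b + t) / (-L)) := by
      intro t ht
      have hs1 : Real.exp ((b+t)/(-L)) = Real.exp (-(b/L)) * Real.exp (-(t/L)) := by
        rw [← Real.exp_add, div_neg, add_div, neg_add]
      have hs2 : Real.exp (-((b+t)/(-L))) = Real.exp (b/L) * Real.exp (t/L) := by
        rw [← Real.exp_add, div_neg, neg_neg, add_div]
      rw [hrep t ht, Real.sinh_eq, hs1, hs2]
      linear_combination (Real.exp (t/L)/2) * hb1 + (-(Real.exp (-(t/L)))/2) * hb2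
    refine ⟨-L, Set.mem_insert_of_mem _ rfl, C, hC, b, Or.inr (Or.inr (fun t ht => ?_))⟩
    refine ⟨key t ht, ?_⟩
    have := hfpos t ht
    rw [key t ht] at this
    have hsinh : 0 < Real.sinh ((b + t)/(-L)) := by nlinarith [this, hC]
    exact Real.sinh_pos_iff.1 hsinh
  -- c₁>0, c₂=0 : exp with L' = -L
  · refine ⟨-L, Set.mem_insert_of_mem _ rfl, c₁/2, by linarith, 0, Or.inl (fun t ht => ?_)⟩
    rw [hrep t ht, h2]
    rw [div_neg, ← neg_div]
    ring
  -- c₁>0, c₂>0 : cosh with L' = L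
  · have hprod : (0:ℝ) < c₁ * c₂ := by nlinarith
    set C := Real.sqrt (c₁ * c₂) with hCdef
    have hC : 0 < C := Real.sqrt_pos.2 hprod
    have hCsq : C^2 = c₁ * c₂ := Real.sq_sqrt hprod.le
    set b := L * Real.log (c₂ / C) with hbdef
    have hbL : b / L = Real.log (c₂ / C) := by rw [hbdef]; field_simp
    have hb1 : C * Real.exp (b/L) = c₂ := by
      rw [hbL, Real.exp_log (div_pos h2 hC)]
      field_simp
    have hb2 : C * Real.exp (-(b/L)) = c₁ := by
      rw [hbL, Real.exp_neg, Real.exp_log (div_pos h2 hC), inv_div,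
        ← mul_div_assoc, div_eq_iff h2.ne']
      nlinarith [hCsq]
    refine ⟨L, Set.mem_insert _ _, C, hC, b, Or.inr (Or.inl (fun t ht => ?_))⟩
    have hs1 : Real.exp ((b+t)/L) = Real.exp (b/L) * Real.exp (t/L) := by
      rw [← Real.exp_add, add_div]
    have hs2 : Real.exp (-((b+t)/L)) = Real.exp (-(b/L)) * Real.exp (-(t/L)) := by
      rw [← Real.exp_add, add_div, neg_add]
    rw [hrep t ht, Real.cosh_eq, hs1, hs2]
    linear_combination (-(Real.exp (t/L))/2) * hb1 + (-(Real.exp (-(t/L)))/2) * hb2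

lemma solLin {I : Set ℝ} (hIconn : I.OrdConnected) {f : ℝ → ℝ}
    (hf : ∀ t ∈ I, DifferentiableAt ℝ f t)
    (hf' : ∀ t ∈ I, DifferentiableAt ℝ (deriv f) t)
    (hode : ∀ t ∈ I, deriv (deriv f) t = 0) :
    ∃ a c : ℝ, ∀ t ∈ I, f t = a * t + c := by
  rcases Set.eq_empty_or_nonempty I with hI | ⟨t₀, ht₀⟩
  · exact ⟨0, 0, by simp [hI]⟩
  have hgd : ∀ t ∈ I, HasDerivAt (deriv f) 0 t := by
    intro t ht
    have := (hf' t ht).hasDerivAt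
    rwa [hode t ht] at this
  have hconst : ∀ t ∈ I, deriv f t = deriv f t₀ := fun t ht =>
    constOn' hIconn hgd t₀ ht₀ t ht
  set a := deriv f t₀ with ha
  have hgd2 : ∀ t ∈ I, HasDerivAt (fun s => f s - a * s) 0 t := by
    intro t ht
    have := (hf t ht).hasDerivAt.sub ((hasDerivAt_id t).const_mul a)
    rw [hconst t ht] at this
    exact this.congr_deriv (by simp)
  refine ⟨a, f t₀ - a * t₀, fun t ht => ?_⟩
  have := constOn' hIconn hgd2 t₀ ht₀ t ht
  linarith


/-- Classification of positive warping functions `f` on an open interval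
`I` for which `−(1/8)·n·(n−1)·(B² + 2B')` is a constant `Λ̄`, where `B := 2f'/f`.
Exactly one of three cases holds, according to the sign of `Λ̄`. -/
theorem stmt_7 (n : ℕ) (hn : 2 ≤ n)
    (I : Set ℝ) (hIopen : IsOpen I) (hIconn : I.OrdConnected)
    (f : ℝ → ℝ)
    (hf : ∀ t ∈ I, DifferentiableAt ℝ f t)
    (hf' : ∀ t ∈ I, DifferentiableAt ℝ (deriv f) t)
    (hfpos : ∀ t ∈ I, 0 < f t)
    (B : ℝ → ℝ) (hB : B = fun t => 2 * deriv f t / f t)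
    (Λ : ℝ)
    (hΛ : ∀ t ∈ I, -(1/8) * (n : ℝ) * ((n : ℝ) - 1) * ((B t) ^ 2 + 2 * deriv B t) = Λ) :
    ((Λ < 0 ∧
        ∃ L' ∈ ({Real.sqrt ((n : ℝ) * ((n : ℝ) - 1) / (-2 * Λ)),
                 -Real.sqrt ((n : ℝ) * ((n : ℝ) - 1) / (-2 * Λ))} : Set ℝ),
          ∃ C : ℝ, 0 < C ∧ ∃ b : ℝ,
            ((∀ t ∈ I, f t = C * Real.exp (t / L')) ∨
             (∀ t ∈ I, f t = C * Real.cosh ((b + t) / L')) ∨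
             (∀ t ∈ I, f t = C * Real.sinh ((b + t) / L') ∧ 0 < (b + t) / L'))) ∧
      ¬(0 < Λ) ∧ ¬(Λ = 0)) ∨
    ((0 < Λ ∧
        ∃ C : ℝ, 0 < C ∧ ∃ b : ℝ, ∀ t ∈ I,
          f t = C * Real.cos ((b + t) / Real.sqrt ((n : ℝ) * ((n : ℝ) - 1) / (2 * Λ)))) ∧
      ¬(Λ < 0) ∧ ¬(Λ = 0)) ∨
    ((Λ = 0 ∧ ∃ a c : ℝ, ∀ t ∈ I, f t = a * t + c) ∧
      ¬(Λ < 0) ∧ ¬(0 < Λ)) := by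
  subst hB
  have hn2 : (2:ℝ) ≤ (n:ℝ) := by exact_mod_cast hn
  have ha : 1 < (n:ℝ) := by linarith
  have hΛ' : ∀ t ∈ I, -(1/8) * (n:ℝ) * ((n:ℝ) - 1) *
      ((2 * deriv f t / f t) ^ 2 + 2 * deriv (fun s => 2 * deriv f s / f s) t) = Λ := by
    intro t ht
    simpa using hΛ t ht
  have hode := keyODE hf hf' hfpos ha hΛ'
  have hnn : 0 < (n:ℝ) * ((n:ℝ) - 1) := by nlinarith
  rcases lt_trichotomy Λ 0 with hΛs | hΛs | hΛs
  · -- Λ < 0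
    have harg : 0 < (n:ℝ) * ((n:ℝ) - 1) / (-2 * Λ) := by
      apply div_pos hnn; linarith
    set L := Real.sqrt ((n:ℝ) * ((n:ℝ) - 1) / (-2 * Λ)) with hLdef
    have hL : 0 < L := Real.sqrt_pos.2 harg
    have hLsq : L^2 = (n:ℝ) * ((n:ℝ) - 1) / (-2 * Λ) := Real.sq_sqrt harg.le
    have hk : (1:ℝ)/L^2 = -2 * Λ / ((n:ℝ) * ((n:ℝ) - 1)) := by
      rw [hLsq, one_div_div]
    have hode' : ∀ t ∈ I, deriv (deriv f) t = (1/L^2) * f t := by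
      intro t ht
      rw [hode t ht, hk]
    obtain ⟨L', hL', C, hC, b, hcase⟩ := solHyp hIconn hf hf' hfpos hL hode'
    exact Or.inl ⟨⟨hΛs, L', hL', C, hC, b, hcase⟩, not_lt.2 hΛs.le, hΛs.ne⟩
  · -- Λ = 0
    have hode0 : ∀ t ∈ I, deriv (deriv f) t = 0 := by
      intro t ht
      rw [hode t ht, hΛs]
      ring
    obtain ⟨a, c, h⟩ := solLin hIconn hf hf' hode0
    exact Or.inr (Or.inr ⟨⟨hΛs, a, c, h⟩, by simp [hΛs], by simp [hΛs]⟩)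
  · -- Λ > 0
    have harg : 0 < (n:ℝ) * ((n:ℝ) - 1) / (2 * Λ) := by
      apply div_pos hnn; linarith
    set L := Real.sqrt ((n:ℝ) * ((n:ℝ) - 1) / (2 * Λ)) with hLdef
    have hL : 0 < L := Real.sqrt_pos.2 harg
    have hLsq : L^2 = (n:ℝ) * ((n:ℝ) - 1) / (2 * Λ) := Real.sq_sqrt harg.le
    have hk : -((1:ℝ)/L^2) = -2 * Λ / ((n:ℝ) * ((n:ℝ) - 1)) := by
      rw [hLsq, one_div_div]
      ring
    have hode' : ∀ t ∈ I, deriv (deriv f) t = -(1/L^2) * f t := by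
      intro t ht
      rw [hode t ht, ← neg_div, ← hk]
      ring
    obtain ⟨C, hC, b, h⟩ := solCos hIconn hf hf' hfpos hL hode'
    exact Or.inr (Or.inl ⟨⟨hΛs, C, hC, b, h⟩, not_lt.2 hΛs.le, hΛs.ne'⟩)
end

section
/- Let L > 0, let I ⊆ ℝ be an open interval, and let B : ℝ → ℝ be differentiable on I with B(t)² + 2B′(t) = −4/L² for all t ∈ I. Then there exists b ∈ ℝ such that cos((t+b)/L) ≠ 0 and B(t) = −(2/L)·tan((t+b)/L) for all t ∈ I. -/
open Real

/-- Solutions of the Riccati equation `B² + 2B' = −4/L²` (with `L > 0`)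
on an open interval are exactly the tangent profiles `B t = −(2/L)·tan((t+b)/L)`. -/
theorem stmt_9 (L : ℝ) (hL : 0 < L)
    (I : Set ℝ) (hIopen : IsOpen I) (hIconn : I.OrdConnected)
    (B : ℝ → ℝ)
    (hB : ∀ t ∈ I, DifferentiableAt ℝ B t)
    (hric : ∀ t ∈ I, (B t) ^ 2 + 2 * deriv B t = -4 / L ^ 2) :
    ∃ b : ℝ, ∀ t ∈ I, Real.cos ((t + b) / L) ≠ 0 ∧
      B t = -(2 / L) * Real.tan ((t + b) / L) := by
  rcases Set.eq_empty_or_nonempty I with hI | ⟨t₀, ht₀⟩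
  · exact ⟨0, by simp [hI]⟩
  set h : ℝ → ℝ := fun t => L * Real.arctan (-(L / 2) * B t) - t with hh
  have hL2 : (L : ℝ) ≠ 0 := ne_of_gt hL
  -- h has derivative 0 on I
  have hderiv : ∀ t ∈ I, HasDerivAt h 0 t := by
    intro t ht
    have hBt := (hB t ht).hasDerivAt
    have h1 : HasDerivAt (fun t => -(L / 2) * B t) (-(L / 2) * deriv B t) t :=
      hBt.const_mul _
    have h2 : HasDerivAt (fun t => Real.arctan (-(L / 2) * B t))
        (1 / (1 + (-(L / 2) * B t) ^ 2) * (-(L / 2) * deriv B t)) t :=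
      (Real.hasDerivAt_arctan _).comp t h1
    have h3 : HasDerivAt h
        (L * (1 / (1 + (-(L / 2) * B t) ^ 2) * (-(L / 2) * deriv B t)) - 1) t :=
      (h2.const_mul L).sub (hasDerivAt_id t)
    have hd : deriv B t = (-4 / L ^ 2 - (B t) ^ 2) / 2 := by
      have := hric t ht; linarith
    have hden : 1 + (-(L / 2) * B t) ^ 2 ≠ 0 := by positivity
    have : L * (1 / (1 + (-(L / 2) * B t) ^ 2) * (-(L / 2) * deriv B t)) - 1 = 0 := by
      rw [hd]; field_simp; ring
    rwa [this] at h3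
  -- h is constant on I
  have hconst : ∀ t ∈ I, h t = h t₀ := by
    intro t ht
    have hconv : Convex ℝ I := convex_iff_ordConnected.mpr hIconn
    refine hconv.is_const_of_fderivWithin_eq_zero
      (fun x hx => ((hderiv x hx).differentiableAt).differentiableWithinAt)
      (fun x hx => ?_) ht ht₀
    have := ((hderiv x hx).hasFDerivAt.hasFDerivWithinAt).fderivWithin
      (hIopen.uniqueDiffWithinAt hx)
    rw [this]; ext; simp
  refine ⟨L * Real.arctan (-(L / 2) * B t₀) - t₀, fun t ht => ?_⟩
  have hc : h t = h t₀ := hconst t ht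
  have key : (t + (L * Real.arctan (-(L / 2) * B t₀) - t₀)) / L
      = Real.arctan (-(L / 2) * B t) := by
    have : L * Real.arctan (-(L / 2) * B t) - t
        = L * Real.arctan (-(L / 2) * B t₀) - t₀ := hc
    rw [div_eq_iff hL2]
    linarith
  constructor
  · rw [key]
    exact (Real.cos_arctan_pos _).ne'
  · rw [key, Real.tan_arctan]
    field_simp
end

section
/- Let n ≥ 2 be an integer, k > 0, L ≠ 0, b ∈ ℝ, and define f(t) = k^{−1/2}·sinh((b+t)/L) for t ≠ −b. With B := 2f′/f, for every t ≠ −b one has: −(1/8)·n·(n−1)·(B(t)² + 2B′(t)) = −n(n−1)/(2L²), and (1/4)·(n−1)·(n−2)·f(t)²·B′(t) = −(n−1)(n−2)/(2kL²). -/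
open Real

lemma sinh_ne_of (L b t : ℝ) (hL : L ≠ 0) (ht : t ≠ -b) :
    Real.sinh ((b + t) / L) ≠ 0 := by
  intro h
  have h0 : (b + t) / L = 0 := Real.sinh_injective (by simpa using h)
  rcases div_eq_zero_iff.mp h0 with h1 | h1
  · exact ht (by linarith)
  · exact hL h1

lemma deriv_f (k L b : ℝ) (hL : L ≠ 0) (t : ℝ) :
    deriv (fun t => k ^ (-(1 : ℝ) / 2) * Real.sinh ((b + t) / L)) t
      = k ^ (-(1 : ℝ) / 2) * (Real.cosh ((b + t) / L) / L) := by
  have h : HasDerivAt (fun t => (b + t) / L) (1 / L) t := by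
    simpa using ((hasDerivAt_id t).const_add b).div_const L
  have := (h.sinh.const_mul (k ^ (-(1 : ℝ) / 2)))
  convert this.deriv using 1
  ring

/-- For the warping function `f t = k^(−1/2)·sinh((b+t)/L)`
(`k > 0`, `L ≠ 0`, `t ≠ −b`) with `B := 2f'/f`, the ambient cosmological constant is
`−n(n−1)/(2L²)` and the induced one is `−(n−1)(n−2)/(2kL²)`. -/
theorem stmt_13 (n : ℕ) (hn : 2 ≤ n) (k L b : ℝ) (hk : 0 < k) (hL : L ≠ 0)
    (f : ℝ → ℝ) (hf : f = fun t => k ^ (-(1 : ℝ) / 2) * Real.sinh ((b + t) / L))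
    (B : ℝ → ℝ) (hB : B = fun t => 2 * deriv f t / f t) :
    ∀ t : ℝ, t ≠ -b →
      -(1/8) * (n : ℝ) * ((n : ℝ) - 1) * ((B t) ^ 2 + 2 * deriv B t) =
        -(n : ℝ) * ((n : ℝ) - 1) / (2 * L ^ 2) ∧
      (1/4) * ((n : ℝ) - 1) * ((n : ℝ) - 2) * (f t) ^ 2 * deriv B t =
        -((n : ℝ) - 1) * ((n : ℝ) - 2) / (2 * k * L ^ 2) := by
  intro t ht
  set c : ℝ := k ^ (-(1 : ℝ) / 2) with hc
  have hcpos : 0 < c := Real.rpow_pos_of_pos hk _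
  have hc2 : c ^ 2 = k⁻¹ := by
    rw [hc, ← Real.rpow_natCast (k ^ (-(1:ℝ)/2)) 2, ← Real.rpow_mul hk.le]
    norm_num
    exact Real.rpow_neg_one k
  have hs := sinh_ne_of L b t hL ht
  -- B agrees with g near t
  have hBg : B =ᶠ[nhds t] fun t => 2 * Real.cosh ((b + t) / L) / (L * Real.sinh ((b + t) / L)) := by
    have hopen : IsOpen {s : ℝ | s ≠ -b} := isOpen_ne
    filter_upwards [hopen.mem_nhds ht] with s hs'
    have hss := sinh_ne_of L b s hL hs'
    rw [hB, hf]
    simp only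
    rw [deriv_f k L b hL, ← hc]
    have hc0 : c ≠ 0 := hcpos.ne'
    field_simp
  have hBt : B t = 2 * Real.cosh ((b + t) / L) / (L * Real.sinh ((b + t) / L)) :=
    hBg.eq_of_nhds
  have hderivB : deriv B t = -2 / (L ^ 2 * Real.sinh ((b + t) / L) ^ 2) := by
    rw [hBg.deriv_eq]
    have h : HasDerivAt (fun t => (b + t) / L) (1 / L) t := by
      simpa using ((hasDerivAt_id t).const_add b).div_const L
    have hcd : HasDerivAt (fun s => 2 * Real.cosh ((b + s) / L))
        (2 * (Real.sinh ((b + t) / L) * (1 / L))) t := h.cosh.const_mul 2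
    have hsd : HasDerivAt (fun s => L * Real.sinh ((b + s) / L))
        (L * (Real.cosh ((b + t) / L) * (1 / L))) t := h.sinh.const_mul L
    have hsne : L * Real.sinh ((b + t) / L) ≠ 0 := mul_ne_zero hL hs
    have := (hcd.div hsd hsne).deriv
    rw [show (fun t => 2 * Real.cosh ((b + t) / L) / (L * Real.sinh ((b + t) / L))) = ((fun s => 2 * Real.cosh ((b + s) / L)) / fun s => L * Real.sinh ((b + s) / L)) from rfl, this]
    have hid : Real.cosh ((b + t) / L) ^ 2 = 1 + Real.sinh ((b + t) / L) ^ 2 := by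
      have := Real.cosh_sq ((b + t) / L); linarith
    field_simp
    linear_combination (-1) * hid
  have hft : f t = c * Real.sinh ((b + t) / L) := by rw [hf]
  have hid : Real.cosh ((b + t) / L) ^ 2 = 1 + Real.sinh ((b + t) / L) ^ 2 := by
    have := Real.cosh_sq ((b + t) / L); linarith
  constructor
  · rw [hBt, hderivB]
    field_simp
    linear_combination (8 * (1 - (n:ℝ))) * hid
  · rw [hft, hderivB]
    have : (c * Real.sinh ((b + t) / L)) ^ 2 = k⁻¹ * Real.sinh ((b + t) / L) ^ 2 := by
      rw [mul_pow, hc2]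
    rw [this]
    field_simp
    ring
end
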